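/- Let ξ ∈ D[√2] = Z[1/√2]. The equation t†t = ξ has a solution t ∈ D[ω] if and only if ξ is doubly positive (ξ ≥ 0 and ξ• ≥ 0) and there exists t' ∈ D[ω] and a unit u of Z[√2] with t'†t' = uξ. -/

import Mathlib

noncomputable def ω : ℂ := (1 + Complex.I) / (Real.sqrt 2 : ℂ)

noncomputable def zω (a b c d : ℤ) : ℂ := a * ω ^ 3 + b * ω ^ 2 + c * ω + d

/-- Membership in D[ω] = ℤ[1/√2, i]. -/
def inDω (t : ℂ) : Prop := ∃ k : ℕ, ∃ a b c d : ℤ, (Real.sqrt 2 : ℂ) ^ k * t = zω a b c d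

/-- u is a unit of ℤ[√2] (viewed inside ℝ). -/
def unitZsqrt2 (u : ℝ) : Prop :=
  ∃ p q p' q' : ℤ, u = (p : ℝ) + q * Real.sqrt 2 ∧
    ((p : ℝ) + q * Real.sqrt 2) * ((p' : ℝ) + q' * Real.sqrt 2) = 1

lemma hs0 : (Real.sqrt 2 : ℂ) ≠ 0 := by
  simp [Complex.ofReal_ne_zero]

lemma hs2 : (Real.sqrt 2 : ℂ) ^ 2 = 2 := by
  rw [← Complex.ofReal_pow, Real.sq_sqrt (by norm_num : (2:ℝ) ≥ 0)]
  norm_num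

lemma hω2 : ω ^ 2 = Complex.I := by
  unfold ω
  rw [div_pow, hs2]
  have : (1 + Complex.I) ^ 2 = 2 * Complex.I := by
    linear_combination Complex.I_sq
  rw [this]
  ring

lemma hω4 : ω ^ 4 = -1 := by
  have : ω ^ 4 = (ω ^ 2) ^ 2 := by ring
  rw [this, hω2, Complex.I_sq]

lemma hsqrt : ω - ω ^ 3 = (Real.sqrt 2 : ℂ) := by
  have h : ω - ω ^ 3 = ω * (1 - ω ^ 2) := by ring
  rw [h, hω2]
  unfold ω
  rw [div_mul_eq_mul_div, eq_comm, eq_div_iff hs0]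
  linear_combination hs2 + Complex.I_sq

lemma conj_ω : (starRingEnd ℂ) ω = - ω ^ 3 := by
  have h3 : ω ^ 3 = Complex.I * ω := by
    have : ω ^ 3 = ω ^ 2 * ω := by ring
    rw [this, hω2]
  rw [h3]
  unfold ω
  rw [map_div₀, map_add, map_one, Complex.conj_I, Complex.conj_ofReal]
  field_simp
  linear_combination Complex.I_sq

lemma conj_zω (a b c d : ℤ) : (starRingEnd ℂ) (zω a b c d) = zω (-c) (-b) (-a) d := by
  unfold zω
  simp only [map_add, map_mul, map_pow, conj_ω, map_intCast]
  push_cast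
  linear_combination ((b:ℂ) * ω ^ 2 + (a:ℂ) * ω ^ 5 - c * ω + (a:ℂ)*ω*(1-2*ω^4) + (c:ℂ)*ω) * hω4

lemma mul_zω (x y a b c d : ℤ) :
    ((x : ℂ) + (y : ℂ) * (Real.sqrt 2 : ℂ)) * zω a b c d =
      zω (x*a + y*(b - d)) (x*b + y*(c + a)) (x*c + y*(d + b)) (x*d + y*(c - a)) := by
  rw [← hsqrt]
  unfold zω
  push_cast
  linear_combination ((y:ℂ) * ((a:ℂ) - c - a * ω ^ 2 - b * ω)) * hω4

lemma prod_zω (a b c d : ℤ) :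
    (starRingEnd ℂ) (zω a b c d) * zω a b c d =
      ((a^2+b^2+c^2+d^2 : ℤ) : ℂ) + ((a*b+b*c+c*d-a*d : ℤ) : ℂ) * (Real.sqrt 2 : ℂ) := by
  rw [conj_zω, ← hsqrt]
  unfold zω
  push_cast
  linear_combination (-((a:ℂ)^2+b^2+c^2 + ((a:ℂ)*b+b*c)*ω + (a:ℂ)*c*ω^2)) * hω4

lemma r2 : Real.sqrt 2 ^ 2 = 2 := Real.sq_sqrt (by norm_num)

lemma sum_sq (a b c d : ℤ) :
    2 * ((a^2+b^2+c^2+d^2 : ℤ) : ℝ) + 2 * ((a*b+b*c+c*d-a*d : ℤ) : ℝ) * Real.sqrt 2 =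
      (((c:ℝ) - a) + d * Real.sqrt 2)^2 + (((a:ℝ) + c) + b * Real.sqrt 2)^2 := by
  push_cast
  linear_combination (-((b:ℝ)^2) - (d:ℝ)^2) * r2

lemma key_nonneg (a b c d : ℤ) :
    0 ≤ ((a^2+b^2+c^2+d^2 : ℤ) : ℝ) + ((a*b+b*c+c*d-a*d : ℤ) : ℝ) * Real.sqrt 2 ∧
    0 ≤ ((a^2+b^2+c^2+d^2 : ℤ) : ℝ) - ((a*b+b*c+c*d-a*d : ℤ) : ℝ) * Real.sqrt 2 := by
  constructor
  · nlinarith [sum_sq a b c d, sq_nonneg (((c:ℝ) - a) + d * Real.sqrt 2),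
      sq_nonneg (((a:ℝ) + c) + b * Real.sqrt 2)]
  · have h := sum_sq (-a) b (-c) d
    push_cast at h ⊢
    nlinarith [sq_nonneg (((-c:ℝ) + a) + d * Real.sqrt 2),
      sq_nonneg (((-a:ℝ) - c) + b * Real.sqrt 2)]

lemma sqrt2_inj (a b c d : ℤ) (h : (a : ℝ) + b * Real.sqrt 2 = c + d * Real.sqrt 2) :
    a = c ∧ b = d := by
  by_cases hbd : b = d
  · subst hbd
    have : (a:ℝ) = c := by linarith
    exact ⟨by exact_mod_cast this, rfl⟩
  · exfalso
    have hne : ((b - d : ℤ) : ℝ) ≠ 0 := by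
      exact_mod_cast sub_ne_zero.mpr hbd
    have : Real.sqrt 2 = ((c - a : ℤ) : ℝ) / ((b - d : ℤ) : ℝ) := by
      push_cast at hne ⊢
      field_simp
      linarith
    have : Real.sqrt 2 = (((c - a : ℤ) : ℚ) / ((b - d : ℤ) : ℚ) : ℚ) := by
      rw [this]; push_cast; ring
    exact (Rat.not_irrational _) (this ▸ irrational_sqrt_two)

lemma pell_aux : ∀ n : ℕ, ∀ p q : ℤ, 0 < p → 0 ≤ q → q ≤ n → p^2 - 2*q^2 = 1 →
    ∃ s t : ℤ, p = s^2 + 2*t^2 ∧ q = 2*s*t := by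
  intro n
  induction n with
  | zero =>
    intro p q hp hq hqn hpq
    have hq0 : q = 0 := by omega
    subst hq0
    have h1 : (p - 1) * (p + 1) = 0 := by linear_combination hpq
    rcases mul_eq_zero.mp h1 with h | h
    · exact ⟨1, 0, by omega, by ring⟩
    · omega
  | succ n ih =>
    intro p q hp hq hqn hpq
    by_cases hq0 : q = 0
    · subst hq0
      have h1 : (p - 1) * (p + 1) = 0 := by linear_combination hpq
      rcases mul_eq_zero.mp h1 with h | h
      · exact ⟨1, 0, by omega, by ring⟩
      · omega
    · have hq1 : 1 ≤ q := by omega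
      have hq2 : 2 ≤ q := by
        rcases eq_or_lt_of_le hq1 with h | h
        · exfalso
          have hp3 : p^2 = 3 := by rw [← h] at hpq; linarith
          have h4 : 4*p ≤ 7 := by nlinarith [sq_nonneg (p - 2)]
          have hp1 : p = 1 := by omega
          rw [hp1] at hp3; norm_num at hp3
        · omega
      have hqp : q < p := by
        by_contra h
        push_neg at h
        have h2 : p^2 ≤ q^2 := pow_le_pow_left₀ (le_of_lt hp) h 2
        nlinarith [sq_nonneg q]
      have hq'0 : 0 ≤ 3*q - 2*p := by
        by_contra h
        push_neg at h
        have h1 : 3*q + 1 ≤ 2*p := by omega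
        have h2 : (3*q+1)^2 ≤ (2*p)^2 := pow_le_pow_left₀ (by omega) h1 2
        nlinarith
      have hp'0 : 0 < 3*p - 4*q := by
        by_contra h
        push_neg at h
        have h1 : 3*p ≤ 4*q := by omega
        have h2 : (3*p)^2 ≤ (4*q)^2 := pow_le_pow_left₀ (by omega) h1 2
        nlinarith
      have hpq' : (3*p - 4*q)^2 - 2*(3*q - 2*p)^2 = 1 := by linear_combination hpq
      obtain ⟨s', t', hs', ht'⟩ := ih (3*p - 4*q) (3*q - 2*p) hp'0 hq'0 (by omega) hpq'
      exact ⟨s' + 2*t', s' + t', by linear_combination 3*hs' + 4*ht', by linear_combination 2*hs' + 3*ht'⟩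

lemma pell_sq (p q : ℤ) (hp : 0 < p) (hpq : p^2 - 2*q^2 = 1) :
    ∃ s t : ℤ, p = s^2 + 2*t^2 ∧ q = 2*s*t := by
  by_cases hq : 0 ≤ q
  · exact pell_aux q.toNat p q hp hq (by omega) hpq
  · obtain ⟨s, t, hs, ht⟩ := pell_aux (-q).toNat p (-q) hp (by omega) (by omega) (by linear_combination hpq)
    exact ⟨s, -t, by linarith, by linarith [ht]⟩

lemma master (t : ℂ) (x : ℝ) (hD : inDω t) (ht : (starRingEnd ℂ) t * t = (x : ℝ)) :
    ∃ (A B : ℤ) (k : ℕ), (2:ℝ)^k * x = (A:ℝ) + B * Real.sqrt 2 ∧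
      0 ≤ (A:ℝ) - B * Real.sqrt 2 ∧ 0 ≤ (A:ℝ) + B * Real.sqrt 2 := by
  obtain ⟨k, a, b, c, d, h⟩ := hD
  refine ⟨a^2+b^2+c^2+d^2, a*b+b*c+c*d-a*d, k, ?_, (key_nonneg a b c d).2, (key_nonneg a b c d).1⟩
  have e1 : (starRingEnd ℂ) ((Real.sqrt 2 : ℂ)^k * t) * ((Real.sqrt 2 : ℂ)^k * t) =
      (2:ℂ)^k * (x:ℂ) := by
    rw [map_mul, map_pow, Complex.conj_ofReal]
    have h2 : ((Real.sqrt 2:ℂ))^k * (starRingEnd ℂ) t * ((Real.sqrt 2:ℂ)^k * t) =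
        ((Real.sqrt 2:ℂ)^2)^k * ((starRingEnd ℂ) t * t) := by ring
    rw [h2, hs2, ht]
  have e3 : (((2:ℝ)^k * x : ℝ) : ℂ) =
      ((((a^2+b^2+c^2+d^2:ℤ):ℝ) + ((a*b+b*c+c*d-a*d:ℤ):ℝ) * Real.sqrt 2 : ℝ) : ℂ) := by
    push_cast
    rw [← e1, h, prod_zω]
    push_cast
    ring
  exact Complex.ofReal_injective e3

lemma match_conj (A B a₀ b₀ : ℤ) (k k₀ : ℕ)
    (h : ((A:ℝ) + B*Real.sqrt 2) * 2^k₀ = ((a₀:ℝ) + b₀*Real.sqrt 2) * 2^k) :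
    ((A:ℝ) - B*Real.sqrt 2) * 2^k₀ = ((a₀:ℝ) - b₀*Real.sqrt 2) * 2^k := by
  have h' : ((A*2^k₀ : ℤ):ℝ) + ((B*2^k₀:ℤ):ℝ) * Real.sqrt 2 =
      ((a₀*2^k : ℤ):ℝ) + ((b₀*2^k:ℤ):ℝ)*Real.sqrt 2 := by push_cast; linarith
  obtain ⟨e1, e2⟩ := sqrt2_inj _ _ _ _ h'
  have f1 : ((A*2^k₀ : ℤ):ℝ) = ((a₀*2^k : ℤ):ℝ) := by exact_mod_cast e1
  have f2 : ((B*2^k₀ : ℤ):ℝ) = ((b₀*2^k : ℤ):ℝ) := by exact_mod_cast e2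
  push_cast at f1 f2
  linear_combination f1 - Real.sqrt 2 * f2


/-- For ξ ∈ D[√2] with conjugate ξ•, the equation t†t = ξ has a solution t ∈ D[ω] iff
    ξ is doubly positive and ξ is †-decomposable up to a unit of ℤ[√2]. -/
theorem diophantine_solvable_iff (ξ ξb : ℝ)
    (hξ : ∃ a b : ℤ, ∃ k : ℕ, ξ = ((a : ℝ) + b * Real.sqrt 2) / 2 ^ k ∧
            ξb = ((a : ℝ) - b * Real.sqrt 2) / 2 ^ k) :
    (∃ t : ℂ, inDω t ∧ (starRingEnd ℂ) t * t = (ξ : ℂ)) ↔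
    (0 ≤ ξ ∧ 0 ≤ ξb ∧
      ∃ t' : ℂ, ∃ u : ℝ, inDω t' ∧ unitZsqrt2 u ∧
        (starRingEnd ℂ) t' * t' = ((u * ξ : ℝ) : ℂ)) := by
  obtain ⟨a₀, b₀, k₀, hx, hxb⟩ := hξ
  have hk₀ : (0:ℝ) < 2^k₀ := by positivity
  constructor
  · rintro ⟨t, hDt, ht⟩
    obtain ⟨A, B, k, hAB, hm, hp⟩ := master t ξ hDt ht
    have hk : (0:ℝ) < 2^k := by positivity
    have hξ0 : 0 ≤ ξ := by nlinarith
    have hmc : ((A:ℝ) + B*Real.sqrt 2) * 2^k₀ = ((a₀:ℝ) + b₀*Real.sqrt 2) * 2^k := by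
      rw [hx] at hAB
      field_simp at hAB
      linarith
    have hmc2 := match_conj A B a₀ b₀ k k₀ hmc
    have hξb0 : 0 ≤ ξb := by
      rw [hxb]
      apply div_nonneg _ (le_of_lt hk₀)
      nlinarith
    refine ⟨hξ0, hξb0, t, 1, hDt, ⟨1, 0, 1, 0, by norm_num, by norm_num⟩, ?_⟩
    rw [one_mul]; exact ht
  · rintro ⟨hξ0, hξb0, t', u, hDt', ⟨p, q, p', q', hu, huu⟩, heq⟩
    by_cases h0 : ξ = 0
    · refine ⟨0, ⟨0, 0, 0, 0, 0, by simp [zω]⟩, by simp [h0]⟩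
    · have hξpos : 0 < ξ := lt_of_le_of_ne hξ0 (Ne.symm h0)
      have hξbpos : 0 < ξb := by
        rcases lt_or_eq_of_le hξb0 with h | h
        · exact h
        · exfalso
          apply h0
          have hb : (a₀:ℝ) - b₀*Real.sqrt 2 = 0 := by
            rw [hxb] at h
            field_simp at h
            linarith
          have h1 : (a₀:ℝ) + (-b₀:ℤ)*Real.sqrt 2 = ((0:ℤ):ℝ) + ((0:ℤ):ℝ)*Real.sqrt 2 := by
            push_cast; linarith
          obtain ⟨e1, e2⟩ := sqrt2_inj _ _ _ _ h1
          rw [hx, e1]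
          have : b₀ = 0 := by omega
          rw [this]
          norm_num
      -- unit algebra
      have h1 : ((p*p'+2*q*q' : ℤ):ℝ) + ((p*q'+p'*q:ℤ):ℝ)*Real.sqrt 2 =
          ((1:ℤ):ℝ) + ((0:ℤ):ℝ)*Real.sqrt 2 := by
        push_cast
        linear_combination huu + (-(q:ℝ)*(q':ℝ))*r2
      obtain ⟨e1, e2⟩ := sqrt2_inj _ _ _ _ h1
      have hNN : (p^2 - 2*q^2) * (p'^2 - 2*q'^2) = 1 := by
        linear_combination (p*p'+2*q*q'+1)*e1 - 2*(p*q'+p'*q)*e2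
      have hune : u ≠ 0 := by
        rw [hu]
        exact left_ne_zero_of_mul_eq_one huu
      have huxi : 0 ≤ u * ξ := by
        have h2 : ((u*ξ:ℝ):ℂ) = ((Complex.normSq t' : ℝ):ℂ) := by
          rw [← heq, Complex.normSq_eq_conj_mul_self]
        have h3 : u*ξ = Complex.normSq t' := Complex.ofReal_injective h2
        rw [h3]
        exact Complex.normSq_nonneg t'
      have hupos : 0 < u := by
        rcases lt_trichotomy u 0 with h | h | h
        · exfalso; nlinarith
        · exact absurd h hune
        · exact h
      obtain ⟨A, B, k, hAB, hm, hp2⟩ := master t' (u*ξ) hDt' heq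
      have hk : (0:ℝ) < 2^k := by positivity
      -- match: (A+B√2)*2^k₀ = ((p a₀+2 q b₀) + (p b₀+q a₀)√2)*2^k
      have hmc : ((A:ℝ) + B*Real.sqrt 2) * 2^k₀ =
          (((p*a₀+2*q*b₀ : ℤ):ℝ) + ((p*b₀+q*a₀:ℤ):ℝ)*Real.sqrt 2) * 2^k := by
        rw [hu] at hAB
        have hd : (a₀:ℝ) + b₀*Real.sqrt 2 = ξ*2^k₀ := by rw [hx]; field_simp
        push_cast
        linear_combination (-(2:ℝ)^k₀) * hAB - (2:ℝ)^k*((p:ℝ)+(q:ℝ)*Real.sqrt 2)*hd + ((2:ℝ)^k*(q:ℝ)*(b₀:ℝ))*r2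
      have hmc2 := match_conj A B (p*a₀+2*q*b₀) (p*b₀+q*a₀) k k₀ hmc
      -- a₀ - b₀√2 = ξb * 2^k₀ > 0
      have hab : (a₀:ℝ) - b₀*Real.sqrt 2 = ξb * 2^k₀ := by
        rw [hxb]; field_simp
      have habpos : 0 < (a₀:ℝ) - b₀*Real.sqrt 2 := by
        rw [hab]; positivity
      -- (p - q√2)·(a₀ - b₀√2)·2^k = (A - B√2)·2^k₀ ≥ 0
      have hprod : (((p:ℝ) - q*Real.sqrt 2) * ((a₀:ℝ) - b₀*Real.sqrt 2)) * 2^k =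
          ((A:ℝ) - B*Real.sqrt 2) * 2^k₀ := by
        rw [hmc2]
        push_cast
        linear_combination ((q:ℝ)*(b₀:ℝ)*(2:ℝ)^k)*r2
      have hubul : 0 ≤ (p:ℝ) - q*Real.sqrt 2 := by
        by_contra h
        push_neg at h
        have h2 := mul_neg_of_neg_of_pos h (mul_pos habpos hk)
        nlinarith [mul_nonneg hm hk₀.le, hprod, h2]
      -- norm is 1
      have hNR : ((p^2-2*q^2 : ℤ):ℝ) = ((p:ℝ)+q*Real.sqrt 2)*((p:ℝ)-q*Real.sqrt 2) := by
        push_cast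
        linear_combination ((q:ℝ)^2)*r2
      have hN1 : p^2 - 2*q^2 = 1 := by
        rcases Int.isUnit_iff.mp (IsUnit.of_mul_eq_one _ hNN) with h | h
        · exact h
        · exfalso
          rw [h] at hNR
          rw [hu] at hupos
          push_cast at hNR
          nlinarith [mul_nonneg hupos.le hubul]
      have hppos : 0 < p := by
        have : (0:ℝ) < 2*p := by rw [hu] at hupos; linarith
        have : (0:ℝ) < (p:ℝ) := by linarith
        exact_mod_cast this
      obtain ⟨s₁, t₁, hs₁, ht₁⟩ := pell_sq p q hppos hN1
      have hε2 : (s₁^2 - 2*t₁^2)^2 = 1 := by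
        have h2 := hN1
        rw [hs₁, ht₁] at h2
        linear_combination h2
      -- real versions
      have hv : ((p:ℝ) + q*Real.sqrt 2) = (((s₁:ℝ) + t₁*Real.sqrt 2))^2 := by
        rw [hs₁, ht₁]
        push_cast
        linear_combination (-(t₁:ℝ)^2)*r2
      have hvc : ((s₁:ℝ) + t₁*Real.sqrt 2) * ((s₁:ℝ) - t₁*Real.sqrt 2) =
          ((s₁^2 - 2*t₁^2 : ℤ):ℝ) := by
        push_cast
        linear_combination (-(t₁:ℝ)^2)*r2
      have hε2R : (((s₁^2 - 2*t₁^2 : ℤ):ℝ))^2 = 1 := by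
        exact_mod_cast congrArg (fun n : ℤ => (n:ℝ)) hε2
      set x : ℤ := (s₁^2 - 2*t₁^2) * s₁ with hxdef
      set y : ℤ := -(s₁^2 - 2*t₁^2) * t₁ with hydef
      have hcu : u * (((x:ℤ):ℝ) + ((y:ℤ):ℝ)*Real.sqrt 2)^2 = 1 := by
        have hc : ((x:ℤ):ℝ) + ((y:ℤ):ℝ)*Real.sqrt 2 =
            ((s₁^2-2*t₁^2 : ℤ):ℝ) * (((s₁:ℝ) - t₁*Real.sqrt 2)) := by
          rw [hxdef, hydef]; push_cast; ring
        rw [hc, hu, hv]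
        have : (((s₁:ℝ) + t₁*Real.sqrt 2))^2 * (((s₁^2-2*t₁^2 : ℤ):ℝ) * ((s₁:ℝ) - t₁*Real.sqrt 2))^2 =
            ((((s₁:ℝ) + t₁*Real.sqrt 2) * ((s₁:ℝ) - t₁*Real.sqrt 2))^2) * (((s₁^2-2*t₁^2 : ℤ):ℝ))^2 := by
          ring
        rw [this, hvc, hε2R]
        norm_num
      set c : ℝ := ((x:ℤ):ℝ) + ((y:ℤ):ℝ)*Real.sqrt 2 with hcdef
      refine ⟨t' * (c:ℂ), ?_, ?_⟩
      · obtain ⟨k', a, b, c', d, h'⟩ := hDt'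
        refine ⟨k', x*a + y*(b - d), x*b + y*(c' + a), x*c' + y*(d + b), x*d + y*(c' - a), ?_⟩
        have hC : (c:ℂ) = ((x:ℤ):ℂ) + ((y:ℤ):ℂ)*(Real.sqrt 2:ℂ) := by
          rw [hcdef]; push_cast; ring
        rw [hC, show (Real.sqrt 2:ℂ)^k' * (t' * (((x:ℤ):ℂ) + ((y:ℤ):ℂ)*(Real.sqrt 2:ℂ))) =
            (((x:ℤ):ℂ) + ((y:ℤ):ℂ)*(Real.sqrt 2:ℂ)) * ((Real.sqrt 2:ℂ)^k' * t') from by ring,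
          h', mul_zω]
      · rw [map_mul, Complex.conj_ofReal,
          show (starRingEnd ℂ) t' * (c:ℂ) * (t' * (c:ℂ)) =
            ((starRingEnd ℂ) t' * t') * ((c:ℂ)*(c:ℂ)) from by ring, heq]
        rw [← Complex.ofReal_mul, ← Complex.ofReal_mul]
        congr 1
        linear_combination ξ * hcu
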